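/- Let φ : (0,∞) → [0,∞) be integrable and unimodal with mode u* > 0, i.e., φ is nondecreasing on (0,u*] and nonincreasing on [u*,∞). Then for every x > 0, |∫₀^∞ cos(ux) φ(u) du| ≤ π·φ(u*)/x and |∫₀^∞ sin(ux) φ(u) du| ≤ π·φ(u*)/x. -/

import Mathlib

open MeasureTheory Real Set

private lemma translate_int (f : ℝ → ℝ) (h : ℝ) (s : Set ℝ) :
    ∫ u in (fun u => u + h) ⁻¹' s, f (u + h) = ∫ u in s, f u :=
  (measurePreserving_add_right volume h).setIntegral_preimage_emb
    (measurableEmbedding_addRight h) f s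

private lemma key_osc (φ : ℝ → ℝ)
    (hpos : ∀ u ∈ Ioi (0:ℝ), 0 ≤ φ u)
    (hint : IntegrableOn φ (Ioi 0))
    (ustar : ℝ) (hustar : 0 < ustar)
    (hmono : MonotoneOn φ (Ioc 0 ustar))
    (hanti : AntitoneOn φ (Ici ustar))
    (x : ℝ) (hx : 0 < x)
    (w : ℝ → ℝ) (hwc : Continuous w) (hw1 : ∀ t, |w t| ≤ 1)
    (hwpi : ∀ t, w (t + π) = - w t) :
    |∫ u in Ioi (0:ℝ), w (u * x) * φ u| ≤ π * φ ustar / x := by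
  set h : ℝ := π / x with hh
  have hh0 : 0 < h := div_pos pi_pos hx
  have hhx : h * x = π := div_mul_cancel₀ _ hx.ne'
  set M : ℝ := φ ustar with hMdef
  have hM0 : 0 ≤ M := hpos ustar hustar
  have hsup : ∀ u ∈ Ioi (0:ℝ), φ u ≤ M := by
    intro u hu
    rcases le_total u ustar with hle | hle
    · exact hmono ⟨hu, hle⟩ ⟨hustar, le_rfl⟩ hle
    · exact hanti (le_refl ustar) hle hle
  -- translated integrability
  have hφT : IntegrableOn (fun u => φ (u + h)) (Ioi (-h)) := by
    have := ((measurePreserving_add_right volume h).integrableOn_comp_preimage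
      (measurableEmbedding_addRight h) (f := φ) (s := Ioi 0)).2 hint
    rw [preimage_add_const_Ioi, zero_sub] at this
    exact this
  have hφT0 : IntegrableOn (fun u => φ (u + h)) (Ioi 0) :=
    hφT.mono_set (Ioi_subset_Ioi (by linarith))
  have hwm : ∀ y : ℝ, AEStronglyMeasurable (fun u : ℝ => w (u * x))
      (volume.restrict (Ioi y)) :=
    fun y => (hwc.comp (continuous_id.mul continuous_const)).aestronglyMeasurable
  have hwb : ∃ C, ∀ u : ℝ, ‖w (u * x)‖ ≤ C := ⟨1, fun u => by
    simpa [Real.norm_eq_abs] using hw1 (u * x)⟩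
  have hI1 : IntegrableOn (fun u => w (u * x) * φ u) (Ioi 0) :=
    hint.bdd_mul (hwm 0) (ae_of_all _ hwb.choose_spec)
  have hI2 : IntegrableOn (fun u => w (u * x) * φ (u + h)) (Ioi (-h)) :=
    hφT.bdd_mul (hwm (-h)) (ae_of_all _ hwb.choose_spec)
  have hI2' : IntegrableOn (fun u => w (u * x) * φ (u + h)) (Ioi 0) :=
    hI2.mono_set (Ioi_subset_Ioi (by linarith))
  have hI2'' : IntegrableOn (fun u => w (u * x) * φ (u + h)) (Ioc (-h) 0) :=
    hI2.mono_set Ioc_subset_Ioi_self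
  set I : ℝ := ∫ u in Ioi (0:ℝ), w (u * x) * φ u with hIdef
  -- reflection identity
  have hIeq : I = - ∫ u in Ioi (-h), w (u * x) * φ (u + h) := by
    have t1 := translate_int (fun u => w (u * x) * φ u) h (Ioi 0)
    rw [preimage_add_const_Ioi, zero_sub] at t1
    have t2 : ∀ u : ℝ, w ((u + h) * x) * φ (u + h) = -(w (u * x) * φ (u + h)) := by
      intro u
      have : (u + h) * x = u * x + π := by rw [add_mul, hhx]
      rw [this, hwpi, neg_mul]
    rw [show (fun u : ℝ => w ((u + h) * x) * φ (u + h))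
        = fun u : ℝ => -(w (u * x) * φ (u + h)) from funext t2] at t1
    rw [hIdef, ← t1, integral_neg]
  -- split
  have hsplit : ∫ u in Ioi (-h), w (u * x) * φ (u + h)
      = (∫ u in Ioc (-h) 0, w (u * x) * φ (u + h))
        + ∫ u in Ioi (0:ℝ), w (u * x) * φ (u + h) := by
    rw [← setIntegral_union Ioc_disjoint_Ioi_same measurableSet_Ioi hI2'' hI2',
      Ioc_union_Ioi_eq_Ioi (by linarith : -h ≤ 0)]
  set A : ℝ := ∫ u in Ioc (0:ℝ) h, φ u with hAdef
  -- |∫ Ioc piece| ≤ A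
  have htransA : ∫ u in Ioc (-h) 0, φ (u + h) = A := by
    have := translate_int φ h (Ioc 0 h)
    rw [preimage_add_const_Ioc, zero_sub, sub_self] at this
    exact this
  have hb2 : |∫ u in Ioc (-h) 0, w (u * x) * φ (u + h)| ≤ A := by
    rw [← htransA]
    calc |∫ u in Ioc (-h) 0, w (u * x) * φ (u + h)|
        ≤ ∫ u in Ioc (-h) 0, ‖w (u * x) * φ (u + h)‖ := by
          simpa [Real.norm_eq_abs] using
            norm_integral_le_integral_norm (μ := volume.restrict (Ioc (-h) 0))
              (fun u => w (u * x) * φ (u + h))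
      _ ≤ ∫ u in Ioc (-h) 0, φ (u + h) := by
          apply setIntegral_mono_on (hI2''.norm) _ measurableSet_Ioc
          · intro u hu
            have hp : 0 ≤ φ (u + h) := hpos _ (by simp only [mem_Ioi]; linarith [hu.1])
            rw [Real.norm_eq_abs, abs_mul, abs_of_nonneg hp]
            exact mul_le_of_le_one_left hp (hw1 _)
          · exact hφT.mono_set Ioc_subset_Ioi_self
  -- the unimodal comparison function
  set q : ℝ → ℝ := fun u => if u + h ≤ ustar then φ (u + h) else M with hqdef
  set G : ℝ → ℝ := fun u => q u - φ u with hGdef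
  set c : ℝ := max (ustar - h) 0 with hcdef
  have hc0 : 0 ≤ c := le_max_right _ _
  have hcu : c ≤ ustar := max_le (by linarith) hustar.le
  have hq_eq1 : EqOn q (fun u => φ (u + h)) (Ioc 0 c) := by
    intro u hu
    have hcpos : 0 < c := lt_of_lt_of_le hu.1 hu.2
    have : ustar - h > 0 := by
      by_contra hcon
      push_neg at hcon
      rw [hcdef, max_eq_right hcon] at hcpos
      exact lt_irrefl 0 hcpos
    have hcc : c = ustar - h := max_eq_left this.le
    have : u + h ≤ ustar := by
      have := hu.2
      rw [hcc] at this
      linarith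
    simp only [hqdef, if_pos this]
  have hq_eq2 : EqOn q (fun _ => M) (Ioc c ustar) := by
    intro u hu
    have : ¬ (u + h ≤ ustar) := by
      have : ustar - h ≤ c := le_max_left _ _
      have := hu.1
      push_neg
      linarith
    simp only [hqdef, if_neg this]
  have hφTc : IntegrableOn (fun u => φ (u + h)) (Ioc 0 c) :=
    hφT.mono_set (fun u hu => by simp only [mem_Ioi]; linarith [hu.1, mem_Ioc.1 hu |>.1])
  have hqint1 : IntegrableOn q (Ioc 0 c) :=
    (hφTc.congr_fun hq_eq1.symm measurableSet_Ioc)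
  have hqint2 : IntegrableOn q (Ioc c ustar) :=
    (integrableOn_const (s := Ioc c ustar) (μ := volume) (C := M) measure_Ioc_lt_top.ne).congr_fun
      hq_eq2.symm measurableSet_Ioc
  have hqint : IntegrableOn q (Ioc 0 ustar) := by
    have := hqint1.union hqint2
    rwa [Ioc_union_Ioc_eq_Ioc hc0 hcu] at this
  have hφIoc : IntegrableOn φ (Ioc 0 ustar) :=
    hint.mono_set Ioc_subset_Ioi_self
  have hGint : IntegrableOn G (Ioc 0 ustar) := hqint.sub hφIoc
  -- pointwise inequality
  have hGpoint : ∀ u ∈ Ioi (0:ℝ), |φ u - φ (u + h)|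
      ≤ (φ u - φ (u + h)) + 2 * (Ioc 0 ustar).indicator G u := by
    intro u hu
    have hu0 : (0:ℝ) < u := hu
    rcases le_or_gt u ustar with hle | hlt
    · have hmem : u ∈ Ioc 0 ustar := ⟨hu0, hle⟩
      rw [indicator_of_mem hmem]
      have f1 : φ u ≤ q u := by
        by_cases hc : u + h ≤ ustar
        · simp only [hqdef, if_pos hc]
          exact hmono hmem ⟨by linarith, hc⟩ (by linarith)
        · simp only [hqdef, if_neg hc]
          exact hmono hmem ⟨hustar, le_rfl⟩ hle
      have f2 : φ (u + h) ≤ q u := by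
        by_cases hc : u + h ≤ ustar
        · simp only [hqdef, if_pos hc]
          exact le_rfl
        · simp only [hqdef, if_neg hc]
          push_neg at hc
          exact hanti (le_refl ustar) hc.le hc.le
      rcases abs_cases (φ u - φ (u + h)) with ⟨he, _⟩ | ⟨he, _⟩ <;>
        · rw [he]; simp only [hGdef]; linarith
    · rw [indicator_of_notMem (fun hmem => absurd hmem.2 (not_le.2 hlt))]
      have : φ (u + h) ≤ φ u := hanti (mem_Ici.2 hlt.le) (mem_Ici.2 (by linarith)) (by linarith)
      rw [abs_of_nonneg (by linarith)]
      linarith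
  -- integral identities
  have hDint : IntegrableOn (fun u => φ u - φ (u + h)) (Ioi 0) := hint.sub hφT0
  have hGindInt : Integrable ((Ioc 0 ustar).indicator G) (volume.restrict (Ioi 0)) := by
    rw [integrable_indicator_iff measurableSet_Ioc]
    have : (volume.restrict (Ioi (0:ℝ))).restrict (Ioc 0 ustar)
        = volume.restrict (Ioc 0 ustar) := by
      rw [Measure.restrict_restrict measurableSet_Ioc,
        inter_eq_left.2 Ioc_subset_Ioi_self]
    rw [IntegrableOn, this]
    exact hGint
  have hintD : ∫ u in Ioi (0:ℝ), (φ u - φ (u + h)) = A := by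
    rw [integral_sub hint hφT0]
    have t1 : ∫ u in Ioi (0:ℝ), φ (u + h) = ∫ u in Ioi h, φ u := by
      have := translate_int φ h (Ioi h)
      rw [preimage_add_const_Ioi, sub_self] at this
      exact this
    have t2 : ∫ u in Ioi (0:ℝ), φ u = A + ∫ u in Ioi h, φ u := by
      rw [hAdef, ← setIntegral_union Ioc_disjoint_Ioi_same measurableSet_Ioi
        (hint.mono_set Ioc_subset_Ioi_self) (hint.mono_set (Ioi_subset_Ioi hh0.le)),
        Ioc_union_Ioi_eq_Ioi hh0.le]
    rw [t1, t2]; ring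
  -- bound on ∫ G
  have hGbound : ∫ u in Ioc (0:ℝ) ustar, G u ≤ h * M - A := by
    have hq_split : ∫ u in Ioc (0:ℝ) ustar, q u
        = (∫ u in Ioc h (c + h), φ u) + (ustar - c) * M := by
      rw [← Ioc_union_Ioc_eq_Ioc hc0 hcu,
        setIntegral_union (Ioc_disjoint_Ioc_of_le le_rfl) measurableSet_Ioc hqint1 hqint2,
        setIntegral_congr_fun measurableSet_Ioc hq_eq1,
        setIntegral_congr_fun measurableSet_Ioc hq_eq2]
      have tr : ∫ u in Ioc (0:ℝ) c, φ (u + h) = ∫ u in Ioc h (c + h), φ u := by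
        have := translate_int φ h (Ioc h (c + h))
        rw [preimage_add_const_Ioc, sub_self, add_sub_cancel_right] at this
        exact this
      rw [tr, setIntegral_const, Real.volume_real_Ioc,
        max_eq_left (by linarith), smul_eq_mul]
    rw [hGdef]
    have hGsub : ∫ u in Ioc (0:ℝ) ustar, (q u - φ u)
        = (∫ u in Ioc (0:ℝ) ustar, q u) - ∫ u in Ioc (0:ℝ) ustar, φ u :=
      integral_sub hqint hφIoc
    rcases le_or_gt h ustar with hcase | hcase
    · have hcc : c = ustar - h := max_eq_left (by linarith)
      have hch : c + h = ustar := by rw [hcc]; ring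
      have hφsplit : ∫ u in Ioc (0:ℝ) ustar, φ u
          = A + ∫ u in Ioc h ustar, φ u := by
        rw [hAdef, ← setIntegral_union (Ioc_disjoint_Ioc_of_le le_rfl) measurableSet_Ioc
          (hint.mono_set (fun u hu => hu.1)) (hint.mono_set (fun u hu => by
            simp only [mem_Ioi]; linarith [mem_Ioc.1 hu |>.1])),
          Ioc_union_Ioc_eq_Ioc hh0.le hcase]
      rw [hGsub, hq_split, hch, hφsplit, hcc]
      ring_nf
      linarith
    · have hcc : c = 0 := max_eq_right (by linarith)
      have hempty : Ioc h (c + h) = (∅ : Set ℝ) := by rw [hcc, zero_add, Ioc_self]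
      have hφsplit : A = (∫ u in Ioc (0:ℝ) ustar, φ u) + ∫ u in Ioc ustar h, φ u := by
        rw [hAdef, ← setIntegral_union (Ioc_disjoint_Ioc_of_le le_rfl) measurableSet_Ioc
          (hint.mono_set (fun u hu => hu.1)) (hint.mono_set (fun u hu => by
            simp only [mem_Ioi]; linarith [mem_Ioc.1 hu |>.1])),
          Ioc_union_Ioc_eq_Ioc hustar.le hcase.le]
      have htail : ∫ u in Ioc ustar h, φ u ≤ (h - ustar) * M := by
        have : ∫ u in Ioc ustar h, φ u ≤ ∫ _u in Ioc ustar h, M := by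
          apply setIntegral_mono_on (hint.mono_set (fun u hu => by
            simp only [mem_Ioi]; linarith [mem_Ioc.1 hu |>.1]))
            (integrableOn_const (s := Ioc ustar h) (μ := volume) (C := M) measure_Ioc_lt_top.ne)
            measurableSet_Ioc
          intro u hu
          exact hsup u (by simp only [mem_Ioi]; linarith [hu.1])
        rwa [setIntegral_const, Real.volume_real_Ioc,
          max_eq_left (by linarith), smul_eq_mul] at this
      rw [hGsub, hq_split, hempty, hcc]
      simp only [Measure.restrict_empty, integral_zero_measure]
      linarith
  -- assemble the D bound
  have hDbound : ∫ u in Ioi (0:ℝ), |φ u - φ (u + h)| ≤ 2 * h * M - A := by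
    have step : ∫ u in Ioi (0:ℝ), |φ u - φ (u + h)|
        ≤ ∫ u in Ioi (0:ℝ), ((φ u - φ (u + h)) + 2 * (Ioc 0 ustar).indicator G u) := by
      apply setIntegral_mono_on hDint.abs (hDint.add (hGindInt.const_mul 2))
        measurableSet_Ioi hGpoint
    have hind : ∫ u in Ioi (0:ℝ), (Ioc 0 ustar).indicator G u
        = ∫ u in Ioc (0:ℝ) ustar, G u := by
      rw [setIntegral_indicator measurableSet_Ioc,
        inter_eq_right.2 Ioc_subset_Ioi_self]
    have hsum : ∫ u in Ioi (0:ℝ), ((φ u - φ (u + h)) + 2 * (Ioc 0 ustar).indicator G u)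
        = A + 2 * ∫ u in Ioc (0:ℝ) ustar, G u := by
      rw [integral_add hDint (hGindInt.const_mul 2), hintD, integral_const_mul, hind]
    rw [hsum] at step
    calc ∫ u in Ioi (0:ℝ), |φ u - φ (u + h)| ≤ A + 2 * ∫ u in Ioc (0:ℝ) ustar, G u := step
      _ ≤ A + 2 * (h * M - A) := by linarith [hGbound]
      _ = 2 * h * M - A := by ring
  -- main diff-integral bound
  have hb1 : |∫ u in Ioi (0:ℝ), w (u * x) * (φ u - φ (u + h))| ≤ 2 * h * M - A := by
    have hintWD : IntegrableOn (fun u => w (u * x) * (φ u - φ (u + h))) (Ioi 0) :=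
      hDint.bdd_mul (hwm 0) (ae_of_all _ hwb.choose_spec)
    calc |∫ u in Ioi (0:ℝ), w (u * x) * (φ u - φ (u + h))|
        ≤ ∫ u in Ioi (0:ℝ), ‖w (u * x) * (φ u - φ (u + h))‖ := by
          simpa [Real.norm_eq_abs] using
            norm_integral_le_integral_norm (μ := volume.restrict (Ioi (0:ℝ)))
              (fun u => w (u * x) * (φ u - φ (u + h)))
      _ ≤ ∫ u in Ioi (0:ℝ), |φ u - φ (u + h)| := by
          apply setIntegral_mono_on hintWD.norm hDint.abs measurableSet_Ioi
          intro u _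
          rw [Real.norm_eq_abs, abs_mul]
          exact mul_le_of_le_one_left (abs_nonneg _) (hw1 _)
      _ ≤ 2 * h * M - A := hDbound
  -- combine
  have h2I : I + I = (∫ u in Ioi (0:ℝ), w (u * x) * (φ u - φ (u + h)))
      - ∫ u in Ioc (-h) 0, w (u * x) * φ (u + h) := by
    have : ∫ u in Ioi (0:ℝ), w (u * x) * (φ u - φ (u + h))
        = I - ∫ u in Ioi (0:ℝ), w (u * x) * φ (u + h) := by
      rw [hIdef, ← integral_sub hI1 hI2']
      congr 1
      funext u
      ring
    rw [this, hIeq, hsplit]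
    ring
  have hfin : |I + I| ≤ 2 * h * M := by
    rw [h2I]
    calc |(∫ u in Ioi (0:ℝ), w (u * x) * (φ u - φ (u + h)))
        - ∫ u in Ioc (-h) 0, w (u * x) * φ (u + h)|
        ≤ |∫ u in Ioi (0:ℝ), w (u * x) * (φ u - φ (u + h))|
          + |∫ u in Ioc (-h) 0, w (u * x) * φ (u + h)| := abs_sub _ _
      _ ≤ (2 * h * M - A) + A := add_le_add hb1 hb2
      _ = 2 * h * M := by ring
  have : |I| ≤ h * M := by
    have : |I + I| = 2 * |I| := by rw [← two_mul, abs_mul]; norm_num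
    linarith [hfin, this ▸ hfin]
  calc |I| ≤ h * M := this
    _ = π * M / x := by rw [hh]; ring

theorem smalltime_lemma51_ii (φ : ℝ → ℝ)
    (hpos : ∀ u ∈ Ioi (0:ℝ), 0 ≤ φ u)
    (hint : IntegrableOn φ (Ioi 0))
    (ustar : ℝ) (hustar : 0 < ustar)
    (hmono : MonotoneOn φ (Ioc 0 ustar))
    (hanti : AntitoneOn φ (Ici ustar))
    (x : ℝ) (hx : 0 < x) :
    |∫ u in Ioi (0:ℝ), Real.cos (u * x) * φ u| ≤ π * φ ustar / x ∧
    |∫ u in Ioi (0:ℝ), Real.sin (u * x) * φ u| ≤ π * φ ustar / x := by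
  constructor
  · exact key_osc φ hpos hint ustar hustar hmono hanti x hx Real.cos
      Real.continuous_cos (fun t => Real.abs_cos_le_one t) Real.cos_add_pi
  · exact key_osc φ hpos hint ustar hustar hmono hanti x hx Real.sin
      Real.continuous_sin (fun t => Real.abs_sin_le_one t) Real.sin_add_pi
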